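/- Let p ∈ ℕ, x̄ ∈ ℝ, h > 0, and let u : ℝ → ℝ be (p+2)-times continuously differentiable on [x̄ − h, x̄ + h]. Let T_p u denote the degree-p Taylor polynomial of u at x̄, let F : ℝ → ℝ be measurable with ∫_{x̄−h}^{x̄+h} F² < ∞, and set M_{p+2} = sup_{x ∈ [x̄−h, x̄+h]} |u^{(p+2)}(x)|. Then (∫_{x̄−h}^{x̄+h} (T_p u(x) + F(x) − u(x))² dx)^{1/2} ≤ (∫_{x̄−h}^{x̄+h} (F(x) − ((x − x̄)^{p+1}/(p+1)!)·u^{(p+1)}(x̄))² dx)^{1/2} + √(2h) · (h^{p+2}/(p+2)!) · M_{p+2}. -/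

import Mathlib

open MeasureTheory Set Nat

-- Cauchy–Schwarz for real integrals
lemma my_cs {α : Type*} [MeasurableSpace α] (μ : Measure α) (f g : α → ℝ)
    (hfg : Integrable (fun x => f x * g x) μ)
    (hf : Integrable (fun x => f x ^ 2) μ) (hg : Integrable (fun x => g x ^ 2) μ) :
    ∫ x, f x * g x ∂μ ≤ Real.sqrt (∫ x, f x ^ 2 ∂μ) * Real.sqrt (∫ x, g x ^ 2 ∂μ) := by
  set A := ∫ x, f x ^ 2 ∂μ with hA
  set B := ∫ x, f x * g x ∂μ with hB
  set C := ∫ x, g x ^ 2 ∂μ with hC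
  have hA0 : 0 ≤ A := integral_nonneg fun x => sq_nonneg _
  have hC0 : 0 ≤ C := integral_nonneg fun x => sq_nonneg _
  have key : ∀ t : ℝ, 0 ≤ A * (t * t) + (2 * B) * t + C := by
    intro t
    have : 0 ≤ ∫ x, (t * f x + g x) ^ 2 ∂μ := integral_nonneg fun x => sq_nonneg _
    have heq : ∫ x, (t * f x + g x) ^ 2 ∂μ = A * (t * t) + (2 * B) * t + C := by
      have : (fun x => (t * f x + g x) ^ 2)
          = fun x => (t * t) * f x ^ 2 + (2 * t) * (f x * g x) + g x ^ 2 := by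
        funext x; ring
      have i1 : Integrable (fun x => (t * t) * f x ^ 2 + (2 * t) * (f x * g x)) μ :=
        (hf.const_mul (t * t)).add (hfg.const_mul (2 * t))
      have e2 := integral_add (μ := μ) (hf.const_mul (t * t)) (hfg.const_mul (2 * t))
      have e1 := integral_add (μ := μ) i1 hg
      rw [this, e1, e2, integral_const_mul, integral_const_mul]
      ring
    linarith [heq ▸ this]
  have hdisc : discrim A (2 * B) C ≤ 0 := discrim_le_zero key
  rw [discrim] at hdisc
  have hB2 : B ^ 2 ≤ A * C := by nlinarith
  calc B ≤ |B| := le_abs_self _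
    _ = Real.sqrt (B ^ 2) := (Real.sqrt_sq_eq_abs B).symm
    _ ≤ Real.sqrt (A * C) := Real.sqrt_le_sqrt hB2
    _ = Real.sqrt A * Real.sqrt C := Real.sqrt_mul hA0 _

lemma my_minkowski {α : Type*} [MeasurableSpace α] (μ : Measure α) (f g : α → ℝ)
    (hfm : AEStronglyMeasurable f μ) (hgm : AEStronglyMeasurable g μ)
    (hf : Integrable (fun x => f x ^ 2) μ) (hg : Integrable (fun x => g x ^ 2) μ) :
    Real.sqrt (∫ x, (f x + g x) ^ 2 ∂μ)
      ≤ Real.sqrt (∫ x, f x ^ 2 ∂μ) + Real.sqrt (∫ x, g x ^ 2 ∂μ) := by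
  have hfg : Integrable (fun x => f x * g x) μ := by
    have ib : Integrable (fun x => (f x ^ 2 + g x ^ 2) / 2) μ := (hf.add hg).div_const 2
    refine Integrable.mono' ib (hfm.mul hgm)
      (Filter.Eventually.of_forall fun x => ?_)
    simp only [norm_mul, Real.norm_eq_abs]
    nlinarith [sq_nonneg (|f x| - |g x|), sq_abs (f x), sq_abs (g x)]
  have hcs := my_cs μ f g hfg hf hg
  have hA0 : 0 ≤ ∫ x, f x ^ 2 ∂μ := integral_nonneg fun x => sq_nonneg _
  have hC0 : 0 ≤ ∫ x, g x ^ 2 ∂μ := integral_nonneg fun x => sq_nonneg _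
  have heq : ∫ x, (f x + g x) ^ 2 ∂μ
      = (∫ x, f x ^ 2 ∂μ) + 2 * (∫ x, f x * g x ∂μ) + ∫ x, g x ^ 2 ∂μ := by
    have i1 : Integrable (fun x => f x ^ 2 + 2 * (f x * g x)) μ := hf.add (hfg.const_mul 2)
    have e2 := integral_add (μ := μ) hf (hfg.const_mul 2)
    have e1 := integral_add (μ := μ) i1 hg
    have : (fun x => (f x + g x) ^ 2)
        = fun x => (f x ^ 2 + 2 * (f x * g x)) + g x ^ 2 := by funext x; ring
    rw [this, e1, e2, integral_const_mul]
  calc Real.sqrt (∫ x, (f x + g x) ^ 2 ∂μ)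
      ≤ Real.sqrt ((Real.sqrt (∫ x, f x ^ 2 ∂μ) + Real.sqrt (∫ x, g x ^ 2 ∂μ)) ^ 2) := by
        apply Real.sqrt_le_sqrt
        rw [heq, add_sq, Real.sq_sqrt hA0, Real.sq_sqrt hC0]
        nlinarith [hcs]
    _ = _ := Real.sqrt_sq (by positivity)

-- Sharp two-sided Taylor remainder bound on `Icc a b` with expansion point `x₀` anywhere inside.

-- Sharp two-sided Taylor remainder bound on `Icc a b` with expansion point `x₀` anywhere inside.
lemma my_taylor_bound {u : ℝ → ℝ} {a b C x x₀ : ℝ} {n : ℕ} (hab : a < b)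
    (hu : ContDiffOn ℝ (n + 1 : ℕ) u (Set.Icc a b)) (hx : x ∈ Set.Icc a b)
    (hx₀ : x₀ ∈ Set.Icc a b)
    (hC : ∀ y ∈ Set.Icc a b, |iteratedDerivWithin (n + 1) u (Set.Icc a b) y| ≤ C) :
    |u x - taylorWithinEval u n (Set.Icc a b) x₀ x| ≤ C * |x - x₀| ^ (n + 1) / (n + 1)! := by
  have hu' : ContDiffOn ℝ ((n : ℕ∞) + 1) u (Set.Icc a b) := by exact_mod_cast hu
  have hder : DifferentiableOn ℝ (iteratedDerivWithin n u (Set.Icc a b)) (Set.Icc a b) :=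
    hu'.differentiableOn_iteratedDerivWithin (by exact_mod_cast Nat.lt_succ_self n)
      (uniqueDiffOn_Icc hab)
  set g : ℝ → ℝ := fun t => taylorWithinEval u n (Set.Icc a b) t x with hgdef
  set g' : ℝ → ℝ := fun t =>
    ((n ! : ℝ)⁻¹ * (x - t) ^ n) • iteratedDerivWithin (n + 1) u (Set.Icc a b) t with hg'def
  have hg : ∀ t ∈ Set.Icc a b, HasDerivWithinAt g (g' t) (Set.Icc a b) t := fun t ht =>
    hasDerivWithinAt_taylorWithinEval_at_Icc x hab ht hu'.of_succ hder
  have hgc : ContinuousOn g (Set.Icc a b) := fun t ht => (hg t ht).continuousWithinAt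
  have hgx : g x = u x := taylorWithinEval_self u n (Set.Icc a b) x
  rcases le_total x₀ x with hle | hle
  · have hsub : Set.Icc x₀ x ⊆ Set.Icc a b := Set.Icc_subset_Icc hx₀.1 hx.2
    have hIci : ∀ t ∈ Set.Ico x₀ x, Set.Icc a b ∈ nhdsWithin t (Set.Ici t) := by
      intro t ht
      refine mem_nhdsWithin.2 ⟨Set.Iio b, isOpen_Iio, lt_of_lt_of_le ht.2 hx.2, ?_⟩
      rintro y ⟨hy1, hy2⟩
      exact ⟨le_trans (le_trans hx₀.1 ht.1) hy2, le_of_lt hy1⟩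
    have key := image_norm_le_of_norm_deriv_right_le_deriv_boundary
      (f := fun t => g t - g x₀) (f' := g') (a := x₀) (b := x)
      (B := fun t => C * ((x - x₀) ^ (n + 1) - (x - t) ^ (n + 1)) / (n + 1)!)
      (B' := fun t => C * (x - t) ^ n / n !)
      ((hgc.mono hsub).sub continuousOn_const)
      (fun t ht => ((hg t (hsub ⟨ht.1, ht.2.le⟩)).mono_of_mem_nhdsWithin
        (hIci t ht)).sub_const (g x₀))
      (by simp)
      (fun t => by
        have hm := monomial_has_deriv_aux t x n
        have hd := ((hasDerivAt_const t ((x - x₀) ^ (n + 1))).sub hm).const_mul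
          ((C : ℝ) / (n + 1)!)
        refine HasDerivAt.congr_deriv (HasDerivAt.congr_of_eventuallyEq hd
          (Filter.Eventually.of_forall fun y => ?_)) ?_
        · simp only [Pi.sub_apply]; ring
        · have : ((n + 1)! : ℝ) = (n + 1) * n ! := by
            rw [Nat.factorial_succ]; push_cast; ring
          have hn : (n ! : ℝ) ≠ 0 := by positivity
          rw [this]
          field_simp
          ring)
      (fun t ht => by
        rw [hg'def]
        simp only [smul_eq_mul, Real.norm_eq_abs, abs_mul]
        have h1 : |(n ! : ℝ)⁻¹ * (x - t) ^ n| = (n ! : ℝ)⁻¹ * (x - t) ^ n := by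
          refine abs_of_nonneg ?_
          have : (0:ℝ) ≤ x - t := by linarith [ht.2]
          positivity
        rw [abs_mul] at h1
        rw [h1]
        have h2 := hC t (hsub ⟨ht.1, ht.2.le⟩)
        have h3 : (0:ℝ) ≤ (n ! : ℝ)⁻¹ * (x - t) ^ n := by
          have : (0:ℝ) ≤ x - t := by linarith [ht.2]
          positivity
        calc (n ! : ℝ)⁻¹ * (x - t) ^ n * |iteratedDerivWithin (n + 1) u (Set.Icc a b) t|
            ≤ (n ! : ℝ)⁻¹ * (x - t) ^ n * C := by
              exact mul_le_mul_of_nonneg_left h2 h3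
          _ = C * (x - t) ^ n / n ! := by ring)
    have hkey := key (Set.right_mem_Icc.2 hle)
    rw [hgx] at hkey
    have habs : |x - x₀| = x - x₀ := abs_of_nonneg (by linarith)
    rw [Real.norm_eq_abs] at hkey
    calc |u x - g x₀| ≤ C * ((x - x₀) ^ (n + 1) - (x - x) ^ (n + 1)) / (n + 1)! := hkey
      _ = C * |x - x₀| ^ (n + 1) / (n + 1)! := by
          rw [habs]; simp [sub_self, zero_pow (Nat.succ_ne_zero n)]
  · have hsub : Set.Icc x x₀ ⊆ Set.Icc a b := Set.Icc_subset_Icc hx.1 hx₀.2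
    have hIci : ∀ t ∈ Set.Ico x x₀, Set.Icc a b ∈ nhdsWithin t (Set.Ici t) := by
      intro t ht
      refine mem_nhdsWithin.2 ⟨Set.Iio b, isOpen_Iio, lt_of_lt_of_le ht.2 hx₀.2, ?_⟩
      rintro y ⟨hy1, hy2⟩
      exact ⟨le_trans (le_trans hx.1 ht.1) hy2, le_of_lt hy1⟩
    have key := image_norm_le_of_norm_deriv_right_le_deriv_boundary
      (f := fun t => g t - g x) (f' := g') (a := x) (b := x₀)
      (B := fun t => C * (t - x) ^ (n + 1) / (n + 1)!)
      (B' := fun t => C * (t - x) ^ n / n !)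
      ((hgc.mono hsub).sub continuousOn_const)
      (fun t ht => ((hg t (hsub ⟨ht.1, ht.2.le⟩)).mono_of_mem_nhdsWithin
        (hIci t ht)).sub_const (g x))
      (by simp)
      (fun t => by
        have hm := ((hasDerivAt_id t).sub_const x).pow (n + 1)
        have hd := hm.const_mul ((C : ℝ) / (n + 1)!)
        refine HasDerivAt.congr_deriv (HasDerivAt.congr_of_eventuallyEq hd
          (Filter.Eventually.of_forall fun y => ?_)) ?_
        · simp only [id_eq, Pi.pow_apply]; ring
        · simp only [id_eq]
          have : ((n + 1)! : ℝ) = (n + 1) * n ! := by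
            rw [Nat.factorial_succ]; push_cast; ring
          have hn : (n ! : ℝ) ≠ 0 := by positivity
          rw [this, Nat.add_sub_cancel]
          push_cast
          field_simp)
      (fun t ht => by
        rw [hg'def]
        simp only [smul_eq_mul, Real.norm_eq_abs, abs_mul]
        have hxt : (0:ℝ) ≤ t - x := by linarith [ht.1]
        have h1 : |(x - t) ^ n| = (t - x) ^ n := by
          rw [abs_pow, abs_sub_comm, abs_of_nonneg hxt]
        rw [abs_inv, Nat.abs_cast, h1]
        have h2 := hC t (hsub ⟨ht.1, ht.2.le⟩)
        have h3 : (0:ℝ) ≤ (n ! : ℝ)⁻¹ * (t - x) ^ n := by positivity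
        calc (n ! : ℝ)⁻¹ * (t - x) ^ n * |iteratedDerivWithin (n + 1) u (Set.Icc a b) t|
            ≤ (n ! : ℝ)⁻¹ * (t - x) ^ n * C := mul_le_mul_of_nonneg_left h2 h3
          _ = C * (t - x) ^ n / n ! := by ring)
    have hkey := key (Set.right_mem_Icc.2 hle)
    rw [hgx, Real.norm_eq_abs, abs_sub_comm] at hkey
    have habs : |x - x₀| = x₀ - x := by rw [abs_sub_comm]; exact abs_of_nonneg (by linarith)
    calc |u x - g x₀| ≤ C * (x₀ - x) ^ (n + 1) / (n + 1)! := hkey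
      _ = C * |x - x₀| ^ (n + 1) / (n + 1)! := by rw [habs]

/-- Local error decomposition for a degree-`p` Taylor background plus an
enrichment `F`: the `L²` distance of `T_p u + F` from `u` on `[xbar−h, xbar+h]` is bounded by
the `L²` distance of `F` from the leading Taylor remainder term
`((x−xbar)^{p+1}/(p+1)!)·u^{(p+1)}(xbar)` plus `√(2h)·(h^{p+2}/(p+2)!)·M_{p+2}`, with
`M_{p+2}` the sup of `|u^{(p+2)}|` on the interval. -/
theorem stmt_4 (p : ℕ) (xbar h : ℝ) (hh : 0 < h) (u : ℝ → ℝ)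
    (hu : ContDiffOn ℝ (p + 2 : ℕ) u (Set.Icc (xbar - h) (xbar + h)))
    (F : ℝ → ℝ) (hFmeas : Measurable F)
    (hFint : IntegrableOn (fun x => (F x) ^ 2) (Set.Icc (xbar - h) (xbar + h))) :
    Real.sqrt (∫ x in Set.Icc (xbar - h) (xbar + h),
        ((∑ k ∈ Finset.range (p + 1),
            iteratedDerivWithin k u (Set.Icc (xbar - h) (xbar + h)) xbar *
              (x - xbar) ^ k / (k.factorial : ℝ)) + F x - u x) ^ 2) ≤
      Real.sqrt (∫ x in Set.Icc (xbar - h) (xbar + h),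
          (F x - (x - xbar) ^ (p + 1) / ((p + 1).factorial : ℝ) *
            iteratedDerivWithin (p + 1) u (Set.Icc (xbar - h) (xbar + h)) xbar) ^ 2) +
        Real.sqrt (2 * h) * (h ^ (p + 2) / ((p + 2).factorial : ℝ)) *
          sSup ((fun x => |iteratedDerivWithin (p + 2) u (Set.Icc (xbar - h) (xbar + h)) x|) ''
            Set.Icc (xbar - h) (xbar + h)) := by
  set s : Set ℝ := Set.Icc (xbar - h) (xbar + h) with hs
  have hab : xbar - h < xbar + h := by linarith
  have hxbar : xbar ∈ s := ⟨by linarith, by linarith⟩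
  set M : ℝ := sSup ((fun x => |iteratedDerivWithin (p + 2) u s x|) '' s) with hM
  -- continuity / boundedness of top derivative
  have hcont : ContinuousOn (fun x => |iteratedDerivWithin (p + 2) u s x|) s := by
    have : ContinuousOn (iteratedDerivWithin (p + 2) u s) s :=
      hu.continuousOn_iteratedDerivWithin le_rfl (uniqueDiffOn_Icc hab)
    exact this.abs
  have hbdd : BddAbove ((fun x => |iteratedDerivWithin (p + 2) u s x|) '' s) :=
    (isCompact_Icc.image_of_continuousOn hcont).bddAbove
  have hMle : ∀ y ∈ s, |iteratedDerivWithin (p + 2) u s y| ≤ M :=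
    fun y hy => le_csSup hbdd (Set.mem_image_of_mem _ hy)
  have hM0 : 0 ≤ M := le_trans (abs_nonneg _) (hMle xbar hxbar)
  -- the two functions
  set fF : ℝ → ℝ := fun x =>
    F x - (x - xbar) ^ (p + 1) / ((p + 1).factorial : ℝ) *
      iteratedDerivWithin (p + 1) u s xbar with hfF
  set g : ℝ → ℝ := fun x => taylorWithinEval u (p + 1) s xbar x - u x with hgdef
  -- pointwise decomposition
  have key : ∀ x : ℝ,
      (∑ k ∈ Finset.range (p + 1),
        iteratedDerivWithin k u s xbar * (x - xbar) ^ k / (k.factorial : ℝ)) + F x - u x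
      = fF x + g x := by
    intro x
    simp only [hfF, hgdef]
    rw [taylor_within_apply, Finset.sum_range_succ
      (fun k => ((k ! : ℝ)⁻¹ * (x - xbar) ^ k) • iteratedDerivWithin k u s xbar) (p + 1)]
    simp only [smul_eq_mul]
    rw [Finset.sum_congr rfl (fun k _ => by
      show iteratedDerivWithin k u s xbar * (x - xbar) ^ k / (k.factorial : ℝ)
        = ((k ! : ℝ)⁻¹ * (x - xbar) ^ k) * iteratedDerivWithin k u s xbar
      ring)]
    ring
  -- measurability and integrability
  have hleadc : Continuous fun x : ℝ =>
      (x - xbar) ^ (p + 1) / ((p + 1).factorial : ℝ) * iteratedDerivWithin (p + 1) u s xbar := by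
    fun_prop
  have hfFmeas : Measurable fF := hFmeas.sub hleadc.measurable
  have hfFsq : Integrable (fun x => fF x ^ 2) (volume.restrict s) := by
    have hb : Integrable (fun x => 2 * F x ^ 2 +
        2 * ((x - xbar) ^ (p + 1) / ((p + 1).factorial : ℝ) *
          iteratedDerivWithin (p + 1) u s xbar) ^ 2) (volume.restrict s) :=
      (hFint.const_mul 2).add (((hleadc.pow 2).continuousOn.integrableOn_compact
        isCompact_Icc).const_mul 2)
    refine Integrable.mono' hb ((hfFmeas.pow_const 2).aestronglyMeasurable)
      (Filter.Eventually.of_forall fun x => ?_)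
    simp only [Real.norm_eq_abs, hfF]
    rw [abs_of_nonneg (sq_nonneg _)]
    nlinarith [sq_nonneg (F x + (x - xbar) ^ (p + 1) / ((p + 1).factorial : ℝ) *
      iteratedDerivWithin (p + 1) u s xbar)]
  have hgcont : ContinuousOn g s := by
    have ht : Continuous fun x => taylorWithinEval u (p + 1) s xbar x := by
      simp only [taylor_within_apply]
      exact continuous_finset_sum _ fun i _ => by fun_prop
    exact (ht.continuousOn).sub (hu.continuousOn)
  have hgsq : Integrable (fun x => g x ^ 2) (volume.restrict s) :=
    (hgcont.pow 2).integrableOn_compact isCompact_Icc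
  -- Minkowski
  have hmink := my_minkowski (volume.restrict s) fF g
    (hfFmeas.aestronglyMeasurable) (hgcont.aestronglyMeasurable measurableSet_Icc)
    hfFsq hgsq
  -- pointwise bound for g
  set B : ℝ := h ^ (p + 2) / ((p + 2).factorial : ℝ) * M with hB
  have hB0 : 0 ≤ B := mul_nonneg (by positivity) hM0
  have hgle : ∀ x ∈ s, g x ^ 2 ≤ B ^ 2 := by
    intro x hx
    have hb := my_taylor_bound (n := p + 1) hab hu hx hxbar hMle
    have habs : |x - xbar| ≤ h := by
      rw [abs_le]; constructor <;> [linarith [hx.1]; linarith [hx.2]]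
    have h1 : |g x| ≤ B := by
      rw [hgdef]
      calc |taylorWithinEval u (p + 1) s xbar x - u x|
          = |u x - taylorWithinEval u (p + 1) s xbar x| := abs_sub_comm _ _
        _ ≤ M * |x - xbar| ^ (p + 1 + 1) / (p + 1 + 1)! := hb
        _ ≤ M * h ^ (p + 2) / ((p + 2).factorial : ℝ) := by
            have : |x - xbar| ^ (p + 2) ≤ h ^ (p + 2) :=
              pow_le_pow_left₀ (abs_nonneg _) habs _
            have hf2 : (0:ℝ) < ((p + 2).factorial : ℝ) := by positivity
            show M * |x - xbar| ^ (p + 2) / ((p + 2).factorial : ℝ)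
              ≤ M * h ^ (p + 2) / ((p + 2).factorial : ℝ)
            gcongr
        _ = B := by rw [hB]; ring
    calc g x ^ 2 = |g x| ^ 2 := (sq_abs _).symm
      _ ≤ B ^ 2 := pow_le_pow_left₀ (abs_nonneg _) h1 _
  -- integral bound for g
  have hgint : ∫ x in s, g x ^ 2 ≤ 2 * h * B ^ 2 := by
    have h1 : ∫ x in s, g x ^ 2 ≤ ∫ _ in s, B ^ 2 :=
      setIntegral_mono_on hgsq (integrableOn_const measure_Icc_lt_top.ne)
        measurableSet_Icc hgle
    have h2 : ∫ _ in s, B ^ 2 = (2 * h) * B ^ 2 := by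
      rw [setIntegral_const, hs, Real.volume_real_Icc_of_le (by linarith), smul_eq_mul]
      ring_nf
    linarith [h2 ▸ h1]
  have hgsqrt : Real.sqrt (∫ x in s, g x ^ 2) ≤ Real.sqrt (2 * h) * B := by
    calc Real.sqrt (∫ x in s, g x ^ 2) ≤ Real.sqrt (2 * h * B ^ 2) :=
          Real.sqrt_le_sqrt hgint
      _ = Real.sqrt (2 * h) * Real.sqrt (B ^ 2) := Real.sqrt_mul (by linarith) _
      _ = Real.sqrt (2 * h) * B := by rw [Real.sqrt_sq hB0]
  -- conclusion
  have hrw : (∫ x in s,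
      ((∑ k ∈ Finset.range (p + 1),
          iteratedDerivWithin k u s xbar * (x - xbar) ^ k / (k.factorial : ℝ)) + F x - u x) ^ 2)
      = ∫ x in s, (fF x + g x) ^ 2 :=
    integral_congr_ae (Filter.Eventually.of_forall fun x => by simp only [key x])
  rw [hrw]
  calc Real.sqrt (∫ x in s, (fF x + g x) ^ 2)
      ≤ Real.sqrt (∫ x in s, fF x ^ 2) + Real.sqrt (∫ x in s, g x ^ 2) := hmink
    _ ≤ Real.sqrt (∫ x in s, fF x ^ 2) + Real.sqrt (2 * h) * B := by linarith
    _ = Real.sqrt (∫ x in s, fF x ^ 2) +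
        Real.sqrt (2 * h) * (h ^ (p + 2) / ((p + 2).factorial : ℝ)) * M := by
      rw [hB]; ring
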